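/- Let A be a bounded operator on a complex Hilbert space K, and in H = K ⊕ K consider the four closed subspaces E₁ = K ⊕ 0, E₂ = 0 ⊕ K, E₃ = {(x, Ax) : x ∈ K} and E₄ = {(y, y) : y ∈ K}. Then a bounded operator φ on H satisfies φ(E_i) ⊆ E_i for i = 1,2,3,4 if and only if φ = T ⊕ T for some bounded operator T on K with TA = AT; that is, End(𝓢_A) = { T ⊕ T : T ∈ B(K), AT = TA } is isomorphic to the commutant {A}′. -/
import Mathlib


variable {K : Type*} [NormedAddCommGroup K] [InnerProductSpace ℂ K] [CompleteSpace K]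

/-- `E₁ = K ⊕ 0` inside the Hilbert space direct sum `H = K ⊕ K`. -/
noncomputable def subE1 (K : Type*) [NormedAddCommGroup K] [InnerProductSpace ℂ K] :
    Submodule ℂ (WithLp 2 (K × K)) :=
  Submodule.comap (WithLp.linearEquiv 2 ℂ (K × K)).toLinearMap
    ((⊤ : Submodule ℂ K).prod (⊥ : Submodule ℂ K))

/-- `E₂ = 0 ⊕ K` inside `H = K ⊕ K`. -/
noncomputable def subE2 (K : Type*) [NormedAddCommGroup K] [InnerProductSpace ℂ K] :
    Submodule ℂ (WithLp 2 (K × K)) :=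
  Submodule.comap (WithLp.linearEquiv 2 ℂ (K × K)).toLinearMap
    ((⊥ : Submodule ℂ K).prod (⊤ : Submodule ℂ K))

/-- `E₃ = {(x, Ax) : x ∈ K}`, the graph of `A`, inside `H = K ⊕ K`. -/
noncomputable def subE3 {K : Type*} [NormedAddCommGroup K] [InnerProductSpace ℂ K]
    (A : K →L[ℂ] K) : Submodule ℂ (WithLp 2 (K × K)) :=
  Submodule.comap (WithLp.linearEquiv 2 ℂ (K × K)).toLinearMap
    (LinearMap.graph (A : K →ₗ[ℂ] K))

/-- `E₄ = {(y, y) : y ∈ K}`, the diagonal, inside `H = K ⊕ K`. -/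
noncomputable def subE4 (K : Type*) [NormedAddCommGroup K] [InnerProductSpace ℂ K] :
    Submodule ℂ (WithLp 2 (K × K)) :=
  Submodule.comap (WithLp.linearEquiv 2 ℂ (K × K)).toLinearMap
    (LinearMap.graph (LinearMap.id : K →ₗ[ℂ] K))


section Aux
variable {K : Type*} [NormedAddCommGroup K] [InnerProductSpace ℂ K]

lemma aux_mem_subE1 (x : WithLp 2 (K × K)) :
    x ∈ subE1 K ↔ (WithLp.equiv 2 (K × K) x).2 = 0 := by
  simp [subE1, Submodule.mem_comap, Submodule.mem_prod]

lemma aux_mem_subE2 (x : WithLp 2 (K × K)) :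
    x ∈ subE2 K ↔ (WithLp.equiv 2 (K × K) x).1 = 0 := by
  simp [subE2, Submodule.mem_comap, Submodule.mem_prod]

lemma aux_mem_subE3 (A : K →L[ℂ] K) (x : WithLp 2 (K × K)) :
    x ∈ subE3 A ↔ A (WithLp.equiv 2 (K × K) x).1 = (WithLp.equiv 2 (K × K) x).2 := by
  simp [subE3, Submodule.mem_comap, LinearMap.mem_graph_iff, eq_comm]

lemma aux_mem_subE4 (x : WithLp 2 (K × K)) :
    x ∈ subE4 K ↔ (WithLp.equiv 2 (K × K) x).1 = (WithLp.equiv 2 (K × K) x).2 := by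
  simp [subE4, Submodule.mem_comap, LinearMap.mem_graph_iff, eq_comm]

end Aux

/-- **The endomorphism algebra of the system of four subspaces `𝓢_A` is the commutant of
`A`.**  A bounded operator `φ` on `H = K ⊕ K` leaves each of `E₁`, `E₂`, `E₃ = graph A`,
`E₄ = diagonal` invariant iff `φ = T ⊕ T` for some bounded operator `T` commuting
with `A`. -/

theorem stmt_15 (A : K →L[ℂ] K)
    (φ : WithLp 2 (K × K) →L[ℂ] WithLp 2 (K × K)) :
    ((∀ x ∈ subE1 K, φ x ∈ subE1 K) ∧
     (∀ x ∈ subE2 K, φ x ∈ subE2 K) ∧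
     (∀ x ∈ subE3 A, φ x ∈ subE3 A) ∧
     (∀ x ∈ subE4 K, φ x ∈ subE4 K))
    ↔
    (∃ T : K →L[ℂ] K, T ∘L A = A ∘L T ∧
      ∀ p : WithLp 2 (K × K),
        WithLp.equiv 2 (K × K) (φ p) =
          (T (WithLp.equiv 2 (K × K) p).1, T (WithLp.equiv 2 (K × K) p).2)) := by
  set e := WithLp.prodContinuousLinearEquiv 2 ℂ K K with he
  constructor
  · rintro ⟨h1, h2, h3, h4⟩
    set T : K →L[ℂ] K :=
      ContinuousLinearMap.fst ℂ K K ∘L (e : WithLp 2 (K × K) →L[ℂ] K × K) ∘L φ ∘L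
        (e.symm : K × K →L[ℂ] WithLp 2 (K × K)) ∘L ContinuousLinearMap.inl ℂ K K with hT
    set S : K →L[ℂ] K :=
      ContinuousLinearMap.snd ℂ K K ∘L (e : WithLp 2 (K × K) →L[ℂ] K × K) ∘L φ ∘L
        (e.symm : K × K →L[ℂ] WithLp 2 (K × K)) ∘L ContinuousLinearMap.inr ℂ K K with hS
    have hTapp : ∀ x : K,
        (WithLp.equiv 2 (K × K)) (φ ((WithLp.equiv 2 (K × K)).symm (x, 0))) = (T x, 0) := by
      intro x
      have h0 : ((WithLp.equiv 2 (K × K)).symm (x, 0)) ∈ subE1 K := by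
        rw [aux_mem_subE1]; simp
      have h0' := (aux_mem_subE1 _).mp (h1 _ h0)
      refine Prod.ext ?_ (by simpa using h0')
      rfl
    have hSapp : ∀ y : K,
        (WithLp.equiv 2 (K × K)) (φ ((WithLp.equiv 2 (K × K)).symm (0, y))) = (0, S y) := by
      intro y
      have h0 : ((WithLp.equiv 2 (K × K)).symm (0, y)) ∈ subE2 K := by
        rw [aux_mem_subE2]; simp
      have h0' := (aux_mem_subE2 _).mp (h2 _ h0)
      exact Prod.ext (by simpa using h0') rfl
    have key : ∀ q : K × K,
        (WithLp.equiv 2 (K × K)) (φ ((WithLp.equiv 2 (K × K)).symm q)) = (T q.1, S q.2) := by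
      intro q
      have hq : (WithLp.equiv 2 (K × K)).symm q
          = (WithLp.equiv 2 (K × K)).symm (q.1, 0) + (WithLp.equiv 2 (K × K)).symm (0, q.2) := by
        apply (WithLp.equiv 2 (K × K)).injective
        simp
      rw [hq, map_add]
      show (WithLp.equiv 2 (K × K)) (φ _) + (WithLp.equiv 2 (K × K)) (φ _) = _
      rw [hTapp, hSapp]
      simp [Prod.ext_iff]
    have hTS : S = T := by
      ext y
      have hm : ((WithLp.equiv 2 (K × K)).symm (y, y)) ∈ subE4 K := by
        rw [aux_mem_subE4]; simp
      have h0' := (aux_mem_subE4 _).mp (h4 _ hm)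
      rw [show (WithLp.equiv 2 (K × K)) (φ ((WithLp.equiv 2 (K × K)).symm (y, y)))
          = ((T y, S y) : K × K) from key (y, y)] at h0'
      simpa using h0'.symm
    have hcomm : T ∘L A = A ∘L T := by
      ext x
      have hm : ((WithLp.equiv 2 (K × K)).symm (x, A x)) ∈ subE3 A := by
        rw [aux_mem_subE3]; simp
      have h0' := (aux_mem_subE3 A _).mp (h3 _ hm)
      rw [show (WithLp.equiv 2 (K × K)) (φ ((WithLp.equiv 2 (K × K)).symm (x, A x)))
          = ((T x, S (A x)) : K × K) from key (x, A x), hTS] at h0'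
      simpa using h0'.symm
    refine ⟨T, hcomm, fun p => ?_⟩
    have := key (WithLp.equiv 2 (K × K) p)
    rw [(WithLp.equiv 2 (K × K)).symm_apply_apply, hTS] at this
    exact this
  · rintro ⟨T, hcomm, hφ⟩
    refine ⟨fun x hx => ?_, fun x hx => ?_, fun x hx => ?_, fun x hx => ?_⟩
    · rw [aux_mem_subE1] at hx ⊢
      rw [hφ, hx]; simp
    · rw [aux_mem_subE2] at hx ⊢
      rw [hφ, hx]; simp
    · rw [aux_mem_subE3] at hx ⊢
      rw [hφ]
      have h2 := ContinuousLinearMap.ext_iff.mp hcomm ((WithLp.equiv 2 (K × K)) x).1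
      simp only [ContinuousLinearMap.comp_apply] at h2
      rw [← hx, h2]
    · rw [aux_mem_subE4] at hx ⊢
      rw [hφ, hx]
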